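/- For every n ≥ 1, in the field ℚ(t, x₁, …, x_n) one has ∑_{i=1}^{n} ∏_{j≠i} (t x_j − x_i)/(x_j − x_i) = (1 − t^n)/(1 − t). -/

import Mathlib

noncomputable section

/-- The field `ℚ(t, x₁, …, x_n)`: `t` is the variable `none` and `x_i` the variable `some i`. -/
abbrev K (n : ℕ) : Type := FractionRing (MvPolynomial (Option (Fin n)) ℚ)

def tv (n : ℕ) : K n := algebraMap (MvPolynomial (Option (Fin n)) ℚ) (K n) (MvPolynomial.X none)

def xv (n : ℕ) (i : Fin n) : K n :=
  algebraMap (MvPolynomial (Option (Fin n)) ℚ) (K n) (MvPolynomial.X (some i))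

theorem sum_prod_identity (n : ℕ) (hn : 1 ≤ n) :
    ∑ i : Fin n, ∏ j ∈ Finset.univ.erase i, (tv n * xv n j - xv n i) / (xv n j - xv n i) =
      (1 - tv n ^ n) / (1 - tv n) := by
  classical
  rcases n with _ | m
  · omega
  set t := tv (m+1) with hts
  set x := xv (m+1) with hxs
  set_option synthInstance.maxHeartbeats 200000 in
  have hinj : Function.Injective
      (algebraMap (MvPolynomial (Option (Fin (m+1))) ℚ) (K (m+1))) :=
    IsFractionRing.injective _ _
  have hxinj : Function.Injective x := by
    intro i j h
    exact Option.some.inj (MvPolynomial.X_injective (hinj h))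
  have hx0 : ∀ i, x i ≠ 0 := by
    intro i h
    have h2 : (MvPolynomial.X (some i) : MvPolynomial (Option (Fin (m+1))) ℚ) = 0 :=
      hinj (by rw [map_zero]; exact h)
    exact MvPolynomial.X_ne_zero _ h2
  have ht1 : (1 : K (m+1)) - t ≠ 0 := by
    intro h
    have h1 : t = 1 := by linear_combination -h
    have h2 : (MvPolynomial.X none : MvPolynomial (Option (Fin (m+1))) ℚ) = 1 :=
      hinj (by rw [map_one]; exact h1)
    have := congrArg MvPolynomial.constantCoeff h2
    simp at this
  have hxsub : ∀ i j : Fin (m+1), j ≠ i → x j - x i ≠ 0 := fun i j hij =>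
    sub_ne_zero.mpr (fun h => hij (hxinj h))
  have hP0 : (∏ j : Fin (m+1), x j) ≠ 0 := Finset.prod_ne_zero_iff.mpr (fun j _ => hx0 j)
  set p : Polynomial (K (m+1)) := ∏ j : Fin (m+1), (Polynomial.X - Polynomial.C (t * x j)) with hps
  set q : Polynomial (K (m+1)) := ∏ j : Fin (m+1), (Polynomial.X - Polynomial.C (x j)) with hqs
  have hpm : p.Monic := Polynomial.monic_prod_of_monic _ _ fun j _ => Polynomial.monic_X_sub_C _
  have hqm : q.Monic := Polynomial.monic_prod_of_monic _ _ fun j _ => Polynomial.monic_X_sub_C _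
  have hdp : p.degree = (m+1 : ℕ) := by
    rw [hps, Polynomial.degree_prod,
      Finset.sum_congr rfl fun j _ => Polynomial.degree_X_sub_C _]
    simp
  have hdq : q.degree = (m+1 : ℕ) := by
    rw [hqs, Polynomial.degree_prod,
      Finset.sum_congr rfl fun j _ => Polynomial.degree_X_sub_C _]
    simp
  have hdeg : (p - q).degree < ((Finset.univ : Finset (Fin (m+1))).card : ℕ) := by
    have := Polynomial.degree_sub_lt (hdp.trans hdq.symm) hpm.ne_zero
      (by rw [hpm.leadingCoeff, hqm.leadingCoeff])
    rw [hdp] at this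
    simpa using this
  have hLag := Lagrange.eq_interpolate (s := (Finset.univ : Finset (Fin (m+1)))) (v := x)
    (f := p - q) (hxinj.injOn) hdeg
  have hEval := congrArg (Polynomial.eval (0 : K (m+1))) hLag
  have hpe : ∀ y : K (m+1), Polynomial.eval y p = ∏ j : Fin (m+1), (y - t * x j) := by
    intro y; rw [hps, Polynomial.eval_prod]; simp
  have hqe : ∀ y : K (m+1), Polynomial.eval y q = ∏ j : Fin (m+1), (y - x j) := by
    intro y; rw [hqs, Polynomial.eval_prod]; simp
  have hq0 : ∀ i : Fin (m+1), Polynomial.eval (x i) q = 0 := by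
    intro i
    rw [hqe]
    exact Finset.prod_eq_zero (Finset.mem_univ i) (by ring)
  simp only [Lagrange.interpolate_apply, Polynomial.eval_finset_sum, Polynomial.eval_mul,
    Polynomial.eval_C, Lagrange.basis, Lagrange.basisDivisor, Polynomial.eval_prod,
    Polynomial.eval_sub, Polynomial.eval_X, hq0, sub_zero, hpe, hqe] at hEval
  -- per-term rewriting of the Lagrange sum
  have hterm : ∀ i ∈ (Finset.univ : Finset (Fin (m+1))),
      (∏ j : Fin (m+1), (x i - t * x j)) *
        ∏ j ∈ Finset.univ.erase i, ((x i - x j)⁻¹ * (0 - x j))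
      = ((-1:K (m+1))^m * ((1 - t) * ∏ j : Fin (m+1), x j)) *
        ∏ j ∈ Finset.univ.erase i, ((t * x j - x i) / (x j - x i)) := by
    intro i _
    have hsplit : (∏ j : Fin (m+1), (x i - t * x j)) =
        (x i - t * x i) * ∏ j ∈ Finset.univ.erase i, (x i - t * x j) :=
      (Finset.mul_prod_erase _ _ (Finset.mem_univ i)).symm
    have hPP : (∏ j : Fin (m+1), x j) = x i * ∏ j ∈ Finset.univ.erase i, x j :=
      (Finset.mul_prod_erase _ _ (Finset.mem_univ i)).symm
    have hcard : (Finset.univ.erase i).card = m := by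
      rw [Finset.card_erase_of_mem (Finset.mem_univ i)]; simp
    have hstep : ∀ j ∈ Finset.univ.erase i,
        (x i - t * x j) * ((x i - x j)⁻¹ * (0 - x j))
        = (-1) * (x j * ((t * x j - x i) / (x j - x i))) := by
      intro j hj
      have hji : x j - x i ≠ 0 := hxsub i j (Finset.mem_erase.mp hj).1
      have hij : x i - x j ≠ 0 := fun h => hji (by linear_combination -h)
      field_simp
      ring
    calc (∏ j : Fin (m+1), (x i - t * x j)) *
          ∏ j ∈ Finset.univ.erase i, ((x i - x j)⁻¹ * (0 - x j))
        = (x i - t * x i) * ∏ j ∈ Finset.univ.erase i,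
            ((x i - t * x j) * ((x i - x j)⁻¹ * (0 - x j))) := by
          rw [hsplit, mul_assoc]
          congr 1
          rw [← Finset.prod_mul_distrib]
      _ = (x i - t * x i) * ∏ j ∈ Finset.univ.erase i,
            ((-1) * (x j * ((t * x j - x i) / (x j - x i)))) := by
          rw [Finset.prod_congr rfl hstep]
      _ = ((-1:K (m+1))^m * ((1 - t) * ∏ j : Fin (m+1), x j)) *
            ∏ j ∈ Finset.univ.erase i, ((t * x j - x i) / (x j - x i)) := by
          rw [Finset.prod_mul_distrib, Finset.prod_mul_distrib, Finset.prod_const, hcard, hPP]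
          ring
  rw [Finset.sum_congr rfl hterm, ← Finset.mul_sum] at hEval
  have hL1 : (∏ j : Fin (m+1), ((0:K (m+1)) - t * x j))
      = (-1:K (m+1))^(m+1) * (t^(m+1) * ∏ j : Fin (m+1), x j) := by
    calc ∏ j : Fin (m+1), ((0:K (m+1)) - t * x j)
        = ∏ j : Fin (m+1), ((-1) * (t * x j)) := by
          apply Finset.prod_congr rfl; intros; ring
      _ = _ := by
          rw [Finset.prod_mul_distrib, Finset.prod_mul_distrib, Finset.prod_const,
            Finset.prod_const, Finset.card_univ, Fintype.card_fin]
  have hL2 : (∏ j : Fin (m+1), ((0:K (m+1)) - x j))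
      = (-1:K (m+1))^(m+1) * ∏ j : Fin (m+1), x j := by
    calc ∏ j : Fin (m+1), ((0:K (m+1)) - x j)
        = ∏ j : Fin (m+1), ((-1) * x j) := by
          apply Finset.prod_congr rfl; intros; ring
      _ = _ := by
          rw [Finset.prod_mul_distrib, Finset.prod_const, Finset.card_univ, Fintype.card_fin]
  rw [hL1, hL2] at hEval
  have hε : (-1:K (m+1))^m * (-1:K (m+1))^m = 1 := by
    rw [← pow_add]
    exact Even.neg_one_pow ⟨m, rfl⟩
  rw [eq_div_iff ht1]
  apply mul_right_cancel₀ hP0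
  linear_combination (-(-1:K (m+1))^m) * hEval +
    ((∏ j : Fin (m+1), x j) - t^(m+1) * (∏ j : Fin (m+1), x j) -
      (1 - t) * (∏ j : Fin (m+1), x j) *
        (∑ i : Fin (m+1), ∏ j ∈ Finset.univ.erase i, (t * x j - x i) / (x j - x i))) * hε
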